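/- Let X be a complex Banach space of dimension at least two, let r and s be nonnegative integers with r + s ≥ 1, and let A be a nonzero bounded linear operator on X. Then the following are equivalent: (1) A has rank one; (2) for every bounded linear operator B on X, σ_π(B^r A B^s) is a singleton; (3) for every bounded linear operator B on X with rank(B) ≤ 2, σ_π(B^r A B^s) is a singleton. -/

import Mathlib

open scoped ENNReal
set_option linter.unusedSectionVars false

noncomputable def periSpec {X : Type*} [NormedAddCommGroup X] [NormedSpace ℂ X]
    (T : X →L[ℂ] X) : Set ℂ :=
  {z | z ∈ spectrum ℂ T ∧ (‖z‖₊ : ℝ≥0∞) = spectralRadius ℂ T}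

namespace PeriSpecAux

variable {X : Type*} [NormedAddCommGroup X] [NormedSpace ℂ X] [CompleteSpace X]

lemma nontrivialCLM [Nontrivial X] : Nontrivial (X →L[ℂ] X) := by
  obtain ⟨x, hx⟩ := exists_ne (0 : X)
  refine ⟨0, 1, fun h => hx ?_⟩
  have := congrArg (fun (f : X →L[ℂ] X) => f x) h
  simpa using this.symm

lemma eig_mem (T : X →L[ℂ] X) {μ : ℂ} {w : X} (hw : w ≠ 0) (h : T w = μ • w) :
    μ ∈ spectrum ℂ T := by
  rw [spectrum.mem_iff]
  rintro ⟨U, hU⟩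
  apply hw
  have h0 : (algebraMap ℂ (X →L[ℂ] X) μ - T) w = 0 := by
    rw [Algebra.algebraMap_eq_smul_one]
    simp [ContinuousLinearMap.sub_apply, h]
  calc w = ((↑U⁻¹ * ↑U : X →L[ℂ] X)) w := by rw [U.inv_mul]; simp
    _ = (↑U⁻¹ : X →L[ℂ] X) ((↑U : X →L[ℂ] X) w) := by rw [ContinuousLinearMap.mul_apply]
    _ = 0 := by rw [hU, h0, map_zero]

lemma pow_fix (B : X →L[ℂ] X) {w : X} {c : ℂ} (h : B w = c • w) (k : ℕ) :
    (B ^ k) w = c ^ k • w := by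
  induction k with
  | zero => simp
  | succ k ih =>
    rw [pow_succ, ContinuousLinearMap.mul_apply, h, map_smul, ih, smul_smul, pow_succ]
    ring_nf

lemma spec_poly [Nontrivial X] (T : X →L[ℂ] X) (p : Polynomial ℂ)
    (hp : Polynomial.aeval T p = 0) {μ : ℂ} (hμ : μ ∈ spectrum ℂ T) : p.eval μ = 0 := by
  haveI := nontrivialCLM (X := X)
  have h := spectrum.subset_polynomial_aeval T p ⟨μ, hμ, rfl⟩
  rw [hp, spectrum.zero_eq] at h
  exact h

lemma spec_of_sq [Nontrivial X] (T : X →L[ℂ] X) (c : ℂ)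
    (h : ∀ z, T (T z) = c • T z) {μ : ℂ} (hμ : μ ∈ spectrum ℂ T) :
    μ = 0 ∨ μ = c := by
  have hA : Polynomial.aeval T (Polynomial.X ^ 2 - Polynomial.C c * Polynomial.X) = 0 := by
    ext z
    simp only [map_sub, map_mul, map_pow, Polynomial.aeval_X, Polynomial.aeval_C,
      ContinuousLinearMap.sub_apply, ContinuousLinearMap.zero_apply, sq,
      ContinuousLinearMap.mul_apply]
    rw [Algebra.algebraMap_eq_smul_one]
    simp [h z]
  have := spec_poly T _ hA hμ
  simp only [Polynomial.eval_sub, Polynomial.eval_mul, Polynomial.eval_pow,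
    Polynomial.eval_X, Polynomial.eval_C, sub_eq_zero, sq] at this
  rcases mul_eq_zero.mp (by linear_combination this : μ * (μ - c) = 0) with h0 | h0
  · exact Or.inl h0
  · exact Or.inr (by linear_combination h0)

lemma spec_of_cube [Nontrivial X] (T : X →L[ℂ] X) (l : ℂ)
    (h : ∀ z, T (T (T z)) = (l * l) • T z) {μ : ℂ} (hμ : μ ∈ spectrum ℂ T) :
    μ = 0 ∨ μ = l ∨ μ = -l := by
  have hA : Polynomial.aeval T (Polynomial.X ^ 3 - Polynomial.C (l * l) * Polynomial.X) = 0 := by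
    ext z
    simp only [map_sub, map_mul, map_pow, Polynomial.aeval_X, Polynomial.aeval_C,
      ContinuousLinearMap.sub_apply, ContinuousLinearMap.zero_apply,
      ContinuousLinearMap.mul_apply, pow_succ, pow_zero, one_mul]
    rw [Algebra.algebraMap_eq_smul_one]
    simp [h z, smul_smul]
  have := spec_poly T _ hA hμ
  simp only [Polynomial.eval_sub, Polynomial.eval_mul, Polynomial.eval_pow,
    Polynomial.eval_X, Polynomial.eval_C, sub_eq_zero] at this
  have hf : μ * ((μ - l) * (μ + l)) = 0 := by linear_combination this
  rcases mul_eq_zero.mp hf with h0 | h0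
  · exact Or.inl h0
  · rcases mul_eq_zero.mp h0 with h1 | h1
    · exact Or.inr (Or.inl (by linear_combination h1))
    · exact Or.inr (Or.inr (by linear_combination h1))

lemma radius_eq (T : X →L[ℂ] X) {l : ℂ} (hl : l ∈ spectrum ℂ T)
    (hsub : ∀ μ ∈ spectrum ℂ T, ‖μ‖₊ ≤ ‖l‖₊) :
    spectralRadius ℂ T = (‖l‖₊ : ℝ≥0∞) := by
  apply le_antisymm
  · refine iSup₂_le fun μ hμ => ?_
    exact_mod_cast ENNReal.coe_le_coe.mpr (hsub μ hμ)
  · exact le_iSup₂ (f := fun k (_ : k ∈ spectrum ℂ T) => (‖k‖₊ : ℝ≥0∞)) l hl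

lemma periSpec_single (T : X →L[ℂ] X) {c : ℂ} (hc : c ∈ spectrum ℂ T)
    (hsub : ∀ μ ∈ spectrum ℂ T, μ = 0 ∨ μ = c) : periSpec T = {c} := by
  have hrad : spectralRadius ℂ T = (‖c‖₊ : ℝ≥0∞) := by
    refine radius_eq T hc fun μ hμ => ?_
    rcases hsub μ hμ with rfl | rfl
    · simp
    · exact le_refl _
  ext z
  simp only [periSpec, Set.mem_setOf_eq, Set.mem_singleton_iff]
  constructor
  · rintro ⟨hz, hn⟩
    rcases hsub z hz with rfl | rfl
    · rw [hrad] at hn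
      have : ‖c‖₊ = 0 := by exact_mod_cast hn.symm
      simpa using (nnnorm_eq_zero.mp this).symm
    · rfl
  · rintro rfl
    exact ⟨hc, by rw [hrad]⟩

lemma key [Nontrivial X] (T : X →L[ℂ] X) {u v : X} {l : ℂ} (hl : l ≠ 0)
    (hu0 : u ≠ 0) (hv0 : v ≠ 0) (hu : T u = l • u) (hv : T v = (-l) • v)
    (hcube : ∀ z, T (T (T z)) = (l * l) • T z) :
    ¬ ∃ z, periSpec T = {z} := by
  have hlm : l ∈ spectrum ℂ T := eig_mem T hu0 hu
  have hlm' : -l ∈ spectrum ℂ T := eig_mem T hv0 hv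
  have hrad : spectralRadius ℂ T = (‖l‖₊ : ℝ≥0∞) := by
    refine radius_eq T hlm fun μ hμ => ?_
    rcases spec_of_cube T l hcube hμ with rfl | rfl | rfl
    · simp
    · exact le_refl _
    · simp
  rintro ⟨z, hz⟩
  have h1 : l ∈ periSpec T := ⟨hlm, by rw [hrad]⟩
  have h2 : -l ∈ periSpec T := ⟨hlm', by rw [hrad, nnnorm_neg]⟩
  rw [hz, Set.mem_singleton_iff] at h1 h2
  have : l = -l := h1.trans h2.symm
  apply hl
  linear_combination this / 2

lemma core [Nontrivial X] (T : X →L[ℂ] X) (x y : X)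
    (hxy : ∀ a b : ℂ, a • x + b • y = 0 → a = 0 ∧ b = 0)
    (K11 K12 K21 K22 : ℂ) (htr : K22 = -K11) (hdet : K11 * K11 + K12 * K21 = 1)
    (hT : ∀ p q : ℂ, T (p • x + q • y) = (K11*p + K12*q) • x + (K21*p + K22*q) • y)
    (hrange : ∀ z, ∃ p q : ℂ, T z = p • x + q • y) :
    ¬ ∃ z, periSpec T = {z} := by
  subst htr
  have hT2 : ∀ p q : ℂ, T (T (p • x + q • y)) = p • x + q • y := by
    intro p q
    rw [hT, hT]
    have e1 : K11*(K11*p + K12*q) + K12*(K21*p + -K11*q) = p := by linear_combination p * hdet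
    have e2 : K21*(K11*p + K12*q) + -K11*(K21*p + -K11*q) = q := by linear_combination q * hdet
    rw [e1, e2]
  have hψ0 : ∀ p q : ℂ, ¬(p = 0 ∧ q = 0) → p • x + q • y ≠ 0 :=
    fun p q h hz => h (hxy p q hz)
  -- find eigenvectors for 1 and -1
  obtain ⟨p₁, q₁, hn1, he1a, he1b⟩ :
      ∃ p q : ℂ, ¬(p = 0 ∧ q = 0) ∧ K11*p + K12*q = p ∧ K21*p + -K11*q = q := by
    by_cases hc : K21 = 0
    · have h11 : K11 * K11 = 1 := by linear_combination hdet - K12 * hc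
      by_cases h1 : K11 = 1
      · exact ⟨1, 0, by simp, by simp [h1], by simp [hc]⟩
      · have h1' : K11 = -1 := by
          rcases mul_self_eq_one_iff.mp h11 with h | h
          · exact absurd h h1
          · exact h
        exact ⟨K12, 2, by simp, by rw [h1']; ring, by rw [hc, h1']; ring⟩
    · refine ⟨K11 + 1, K21, fun h => hc h.2, ?_, ?_⟩
      · linear_combination hdet
      · ring
  obtain ⟨p₂, q₂, hn2, he2a, he2b⟩ :
      ∃ p q : ℂ, ¬(p = 0 ∧ q = 0) ∧ K11*p + K12*q = -p ∧ K21*p + -K11*q = -q := by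
    by_cases hc : K21 = 0
    · have h11 : K11 * K11 = 1 := by linear_combination hdet - K12 * hc
      by_cases h1 : K11 = -1
      · exact ⟨1, 0, by simp, by simp [h1], by simp [hc]⟩
      · have h1' : K11 = 1 := by
          rcases mul_self_eq_one_iff.mp h11 with h | h
          · exact h
          · exact absurd h h1
        exact ⟨K12, -2, by simp, by rw [h1']; ring, by rw [hc, h1']; ring⟩
    · refine ⟨K11 - 1, K21, fun h => hc h.2, ?_, ?_⟩
      · linear_combination hdet
      · ring
  refine key T (l := 1) one_ne_zero (hψ0 p₁ q₁ hn1) (hψ0 p₂ q₂ hn2) ?_ ?_ ?_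
  · rw [hT, he1a, he1b, one_smul]
  · rw [hT, he2a, he2b]
    module
  · intro z
    obtain ⟨p, q, hz⟩ := hrange z
    rw [hz, hT2, one_mul, one_smul]

lemma exists_dual {k : ℕ} (u : Fin k → X) (h : LinearIndependent ℂ u) :
    ∃ f : Fin k → (X →L[ℂ] ℂ), ∀ i j, f i (u j) = if j = i then 1 else 0 := by
  set V := Submodule.span ℂ (Set.range u) with hV
  haveI : FiniteDimensional ℂ V := FiniteDimensional.span_of_finite ℂ (Set.finite_range u)
  let b : Module.Basis (Fin k) ℂ V := Module.Basis.span h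
  have hmem : ∀ j, u j ∈ V := fun j => Submodule.subset_span ⟨j, rfl⟩
  have hdual : ∀ i : Fin k, ∃ g : X →L[ℂ] ℂ,
      ∀ w : V, g w = LinearMap.toContinuousLinearMap (b.coord i) w := by
    intro i
    obtain ⟨g, hg, -⟩ := exists_extension_norm_eq V (LinearMap.toContinuousLinearMap (b.coord i))
    exact ⟨g, hg⟩
  choose F hF using hdual
  refine ⟨F, fun i j => ?_⟩
  have h1 := hF i ⟨u j, hmem j⟩
  rw [h1]
  have hbj : (⟨u j, hmem j⟩ : V) = b j := by
    apply Subtype.ext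
    rw [Module.Basis.span_apply]
  simp only [LinearMap.coe_toContinuousLinearMap', hbj, Module.Basis.coord_apply, Module.Basis.repr_self]
  rw [Finsupp.single_apply]

lemma rank_le_two (B : X →L[ℂ] X) (x y : X)
    (h : ∀ z : X, ∃ a b : ℂ, B z = a • x + b • y) :
    LinearMap.rank (B : X →ₗ[ℂ] X) ≤ 2 := by
  have hr : LinearMap.range (B : X →ₗ[ℂ] X) ≤ Submodule.span ℂ {x, y} := by
    rintro w ⟨z, rfl⟩
    obtain ⟨a, b, hab⟩ := h z
    have : (B : X →ₗ[ℂ] X) z = a • x + b • y := hab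
    rw [this]
    exact Submodule.add_mem _
      (Submodule.smul_mem _ _ (Submodule.subset_span (Set.mem_insert _ _)))
      (Submodule.smul_mem _ _ (Submodule.subset_span (Set.mem_insert_of_mem _ rfl)))
  refine le_trans (Submodule.rank_mono hr) (le_trans (rank_span_le _) ?_)
  refine le_trans (Cardinal.mk_insert_le) ?_
  rw [Cardinal.mk_singleton]
  norm_num

lemma rank_le_one_of_dep (L : X →L[ℂ] X)
    (h : ∀ x₁ x₂ : X, ∃ a b : ℂ, ¬(a = 0 ∧ b = 0) ∧ a • L x₁ + b • L x₂ = 0) :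
    LinearMap.rank (L : X →ₗ[ℂ] X) ≤ 1 := by
  by_cases hL : ∀ z, L z = 0
  · have : (L : X →ₗ[ℂ] X) = 0 := by ext z; exact hL z
    rw [this, LinearMap.rank_zero]
    exact zero_le_one
  · push_neg at hL
    obtain ⟨x₀, h₀⟩ := hL
    have hr : LinearMap.range (L : X →ₗ[ℂ] X) ≤ Submodule.span ℂ {L x₀} := by
      rintro w ⟨z, rfl⟩
      obtain ⟨a, b, hab, he⟩ := h z x₀
      rw [Submodule.mem_span_singleton]
      have ha : a ≠ 0 := by
        intro ha0
        rw [ha0, zero_smul, zero_add, smul_eq_zero] at he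
        rcases he with hb | hx
        · exact hab ⟨ha0, hb⟩
        · exact h₀ hx
      refine ⟨-b / a, ?_⟩
      have : (L : X →ₗ[ℂ] X) z = L z := rfl
      rw [this]
      have he2 : a • L z = (-b) • L x₀ := by
        rw [neg_smul]
        exact eq_neg_of_add_eq_zero_left he
      rw [div_eq_inv_mul, ← smul_smul, ← he2, smul_smul, inv_mul_cancel₀ ha, one_smul]
    refine le_trans (Submodule.rank_mono hr) (le_trans (rank_span_le _) ?_)
    rw [Cardinal.mk_singleton]

lemma not_rank_le_one (L : X →L[ℂ] X) (w z : X)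
    (h : ∀ a b : ℂ, a • L w + b • L z = 0 → a = 0 ∧ b = 0) :
    ¬ LinearMap.rank (L : X →ₗ[ℂ] X) ≤ 1 := by
  intro hle
  set M := LinearMap.range (L : X →ₗ[ℂ] X) with hM
  have hm1 : L w ∈ M := ⟨w, rfl⟩
  have hm2 : L z ∈ M := ⟨z, rfl⟩
  have hg : LinearIndependent ℂ (![(⟨L w, hm1⟩ : M), ⟨L z, hm2⟩]) := by
    rw [LinearIndependent.pair_iff]
    intro a b hab
    have : a • L w + b • L z = 0 := by
      have := congrArg (Subtype.val) hab
      simpa using this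
    exact h a b this
  have h2 := hg.cardinal_lift_le_rank
  have h2' : (2 : Cardinal) ≤ Cardinal.lift.{0} (Module.rank ℂ M) := by
    refine le_trans ?_ h2
    simp
  have h3 : Cardinal.lift.{0} (Module.rank ℂ M) ≤ 1 := by
    have := Cardinal.lift_monotone.{u_1, 0} hle
    simpa using this
  have : (2 : Cardinal) ≤ 1 := le_trans h2' h3
  norm_num at this

def geomS (a b : ℂ) : ℕ → ℂ
  | 0 => 0
  | (k+1) => b * geomS a b k + a ^ k

lemma geomS_closed (a b : ℂ) (k : ℕ) : (a - b) * geomS a b k = a ^ k - b ^ k := by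
  induction k with
  | zero => simp [geomS]
  | succ k ih =>
    simp only [geomS, pow_succ]
    linear_combination b * ih

end PeriSpecAux

open PeriSpecAux

set_option maxHeartbeats 1000000 in
theorem rankOne_iff_periSpec_singleton {X : Type*} [NormedAddCommGroup X] [NormedSpace ℂ X]
    [CompleteSpace X] (hdim : 2 ≤ Module.rank ℂ X)
    (r s : ℕ) (hrs : 1 ≤ r + s) (A : X →L[ℂ] X) (hA : A ≠ 0) :
    List.TFAE [
      LinearMap.rank (A : X →ₗ[ℂ] X) = 1,
      ∀ B : X →L[ℂ] X, ∃ z : ℂ, periSpec (B ^ r * A * B ^ s) = {z},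
      ∀ B : X →L[ℂ] X, LinearMap.rank (B : X →ₗ[ℂ] X) ≤ 2 →
        ∃ z : ℂ, periSpec (B ^ r * A * B ^ s) = {z}] := by
  haveI hX : Nontrivial X := by
    rw [← rank_pos_iff_nontrivial (R := ℂ)]
    calc (0 : Cardinal) < 2 := by norm_num
      _ ≤ Module.rank ℂ X := hdim
  tfae_have 1 → 2 := by
    intro h1 B
    set T := B ^ r * A * B ^ s with hTdef
    have hTapp : ∀ z, T z = (B ^ r) (A ((B ^ s) z)) := fun z => by
      simp [hTdef, ContinuousLinearMap.mul_apply]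
    have hrkT : LinearMap.rank (T : X →ₗ[ℂ] X) ≤ 1 := by
      have hEq : (T : X →ₗ[ℂ] X) =
          ((B ^ r : X →L[ℂ] X) : X →ₗ[ℂ] X).comp
            (((A : X →ₗ[ℂ] X).comp ((B ^ s : X →L[ℂ] X) : X →ₗ[ℂ] X))) := by
        ext z
        simp [hTapp z, Module.End.pow_apply]
      rw [hEq]
      have h1' : LinearMap.rank ((A : X →ₗ[ℂ] X).comp ((B ^ s : X →L[ℂ] X) : X →ₗ[ℂ] X))
          ≤ 1 := le_trans (LinearMap.rank_comp_le_left _ _) (le_of_eq h1)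
      refine le_trans ?_ h1'
      have := LinearMap.lift_rank_comp_le_right
        (((A : X →ₗ[ℂ] X).comp ((B ^ s : X →L[ℂ] X) : X →ₗ[ℂ] X)))
        ((B ^ r : X →L[ℂ] X) : X →ₗ[ℂ] X)
      simpa using this
    by_cases hT0 : T = 0
    · refine ⟨0, periSpec_single T ?_ ?_⟩
      · rw [hT0]
        haveI := nontrivialCLM (X := X)
        rw [spectrum.zero_eq]
        rfl
      · intro μ hμ
        rw [hT0] at hμ
        haveI := nontrivialCLM (X := X)
        rw [spectrum.zero_eq] at hμ
        exact Or.inl hμ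
    · have hex : ∃ z₀, T z₀ ≠ 0 := by
        by_contra hno
        push_neg at hno
        exact hT0 (by ext z; simpa using hno z)
      obtain ⟨z₀, hz₀⟩ := hex
      have hrep : ∀ z, ∃ cz : ℂ, T z = cz • T z₀ := by
        intro z
        by_contra hno
        push_neg at hno
        refine not_rank_le_one T z z₀ ?_ hrkT
        intro a b hab
        have ha : a = 0 := by
          by_contra ha0
          apply hno (-b / a)
          have he2 : a • T z = (-b) • T z₀ := by
            rw [neg_smul]
            exact eq_neg_of_add_eq_zero_left hab
          rw [div_eq_inv_mul, ← smul_smul, ← he2, smul_smul, inv_mul_cancel₀ ha0, one_smul]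
        refine ⟨ha, ?_⟩
        rw [ha, zero_smul, zero_add, smul_eq_zero] at hab
        exact hab.resolve_right hz₀
      obtain ⟨c₀, hc₀⟩ := hrep (T z₀)
      have hsq : ∀ z, T (T z) = c₀ • T z := by
        intro z
        obtain ⟨cz, hcz⟩ := hrep z
        rw [hcz, map_smul, hc₀, smul_smul, mul_comm, ← smul_smul, ← hcz]
      refine ⟨c₀, periSpec_single T ?_ ?_⟩
      · exact eig_mem T hz₀ hc₀
      · exact fun μ hμ => spec_of_sq T c₀ hsq hμ
  tfae_have 2 → 3 := fun h B _ => h B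
  tfae_have 3 → 1 := by
    intro h3
    have hne : LinearMap.rank (A : X →ₗ[ℂ] X) ≠ 0 := by
      intro h0
      apply hA
      have hbot := Submodule.rank_eq_zero.mp h0
      ext z
      have : (A : X →ₗ[ℂ] X) z ∈ LinearMap.range (A : X →ₗ[ℂ] X) := ⟨z, rfl⟩
      rw [hbot] at this
      simpa using this
    refine le_antisymm ?_ (Cardinal.one_le_iff_ne_zero.mpr hne)
    by_contra hgt
    have hpair : ∃ x₁ x₂ : X, ∀ a b : ℂ, a • A x₁ + b • A x₂ = 0 → a = 0 ∧ b = 0 := by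
      by_contra hno
      push_neg at hno
      apply hgt
      refine rank_le_one_of_dep A ?_
      intro x₁ x₂
      obtain ⟨a, b, hab, hne'⟩ := hno x₁ x₂
      exact ⟨a, b, fun h => (hne' h.1) h.2, hab⟩
    obtain ⟨x₁, x₂, hind⟩ := hpair
    have hTapp : ∀ (B : X →L[ℂ] X) (z : X), (B ^ r * A * B ^ s) z = (B ^ r) (A ((B ^ s) z)) :=
      fun B z => by simp [ContinuousLinearMap.mul_apply]
    by_cases hA3 : ∃ x : X, (∀ a b : ℂ, a • x + b • A x = 0 → a = 0 ∧ b = 0) ∧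
        ∀ c d : ℂ, c • x + d • A x ≠ A (A x)
    · -- Case A : some x with x, Ax, A²x independent
      obtain ⟨x, hxi, hnsp⟩ := hA3
      have htrip : LinearIndependent ℂ ![x, A x, A (A x)] := by
        rw [Fintype.linearIndependent_iff]
        intro g hg
        simp only [Fin.sum_univ_three, Matrix.cons_val_zero, Matrix.cons_val_one,
          Matrix.head_cons, Matrix.cons_val_two, Matrix.tail_cons] at hg
        have hg2 : g 2 = 0 := by
          by_contra h2
          apply hnsp (-(g 0) / g 2) (-(g 1) / g 2)
          have h' : g 2 • A (A x) = (-(g 0)) • x + (-(g 1)) • A x := by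
            rw [neg_smul, neg_smul]
            have h'' : g 2 • A (A x) = -(g 0 • x + g 1 • A x) :=
              eq_neg_of_add_eq_zero_right hg
            rw [h'']
            abel
          calc (-(g 0) / g 2) • x + (-(g 1) / g 2) • A x
              = (g 2)⁻¹ • ((-(g 0)) • x + (-(g 1)) • A x) := by
                rw [smul_add, smul_smul, smul_smul, div_eq_inv_mul, div_eq_inv_mul]
            _ = (g 2)⁻¹ • (g 2 • A (A x)) := by rw [h']
            _ = A (A x) := by rw [smul_smul, inv_mul_cancel₀ h2, one_smul]
        rw [hg2, zero_smul, add_zero] at hg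
        obtain ⟨h0, h1⟩ := hxi _ _ hg
        intro i
        fin_cases i <;> simp [h0, h1, hg2]
      obtain ⟨F, hF⟩ := exists_dual ![x, A x, A (A x)] htrip
      have h00 : F 0 x = 1 := by simpa using hF 0 0
      have h01 : F 0 (A x) = 0 := by simpa using hF 0 1
      have h02 : F 0 (A (A x)) = 0 := by simpa using hF 0 2
      have h10 : F 1 x = 0 := by simpa using hF 1 0
      have h11 : F 1 (A x) = 1 := by simpa using hF 1 1
      have h12 : F 1 (A (A x)) = 0 := by simpa using hF 1 2
      have h20 : F 2 x = 0 := by simpa using hF 2 0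
      have h21 : F 2 (A x) = 0 := by simpa using hF 2 1
      have h22 : F 2 (A (A x)) = 1 := by simpa using hF 2 2
      set B : X →L[ℂ] X := (F 0 + F 2).smulRight x + (F 1).smulRight (A x) with hBdef
      have hBapp : ∀ z, B z = (F 0 z + F 2 z) • x + F 1 z • A x := by
        intro z
        simp [hBdef, ContinuousLinearMap.smulRight_apply, ContinuousLinearMap.add_apply]
      have hBx : B x = (1 : ℂ) • x := by
        rw [hBapp, h00, h20, h10]
        simp
      have hBax : B (A x) = (1 : ℂ) • A x := by
        rw [hBapp, h01, h21, h11]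
        simp
      have hBaax : B (A (A x)) = x := by
        rw [hBapp, h02, h22, h12]
        simp
      have hBkaax : ∀ k, (B ^ (k + 1)) (A (A x)) = x := by
        intro k
        rw [pow_succ, ContinuousLinearMap.mul_apply, hBaax, pow_fix B hBx]
        simp
      have hrkB : LinearMap.rank (B : X →ₗ[ℂ] X) ≤ 2 :=
        rank_le_two B x (A x) fun z => ⟨_, _, hBapp z⟩
      by_cases hr0 : r = 0
      · have hxi2 : ∀ a b : ℂ, a • A x + b • A (A x) = 0 → a = 0 ∧ b = 0 := by
          intro a b hab
          have hcoef := Fintype.linearIndependent_iff.mp htrip ![0, a, b] ?_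
          · exact ⟨by simpa using hcoef 1, by simpa using hcoef 2⟩
          · simp only [Fin.sum_univ_three, Matrix.cons_val_zero, Matrix.cons_val_one,
              Matrix.head_cons, Matrix.cons_val_two, Matrix.tail_cons, zero_smul, zero_add]
            exact hab
        obtain ⟨s', hs'⟩ : ∃ s', s = s' + 1 := ⟨s - 1, by omega⟩
        refine core _ (A x) (A (A x)) hxi2 0 1 1 0 (by norm_num) (by norm_num) ?_ ?_ (h3 B hrkB)
        · intro p q
          rw [hTapp, hr0, pow_zero, ContinuousLinearMap.one_apply, hs', pow_succ,
            ContinuousLinearMap.mul_apply, map_add, map_smul, map_smul, hBax, hBaax]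
          simp only [map_add, map_smul, pow_fix B hBx, pow_fix B hBax, one_pow, one_smul]
          module
        · intro z
          refine ⟨F 0 z + F 2 z, F 1 z, ?_⟩
          rw [hTapp, hr0, pow_zero, ContinuousLinearMap.one_apply, hs', pow_succ,
            ContinuousLinearMap.mul_apply, hBapp]
          simp only [map_add, map_smul, pow_fix B hBx, pow_fix B hBax, one_pow, one_smul]
      · obtain ⟨r', hr'⟩ : ∃ r', r = r' + 1 := ⟨r - 1, by omega⟩
        refine core _ x (A x) hxi 0 1 1 0 (by norm_num) (by norm_num) ?_ ?_ (h3 B hrkB)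
        · intro p q
          rw [hTapp, hr']
          simp only [map_add, map_smul, pow_fix B hBx, pow_fix B hBax, hBkaax, one_pow, one_smul]
          module
        · intro z
          refine ⟨F 0 ((B ^ r') (A ((B ^ s) z))) + F 2 ((B ^ r') (A ((B ^ s) z))),
            F 1 ((B ^ r') (A ((B ^ s) z))), ?_⟩
          rw [hTapp, hr', pow_succ', ContinuousLinearMap.mul_apply, hBapp]
    · push_neg at hA3
      by_cases hB1 : ∃ (x : X) (c d : ℂ), (∀ a b : ℂ, a • x + b • A x = 0 → a = 0 ∧ b = 0) ∧
          A (A x) = c • x + d • A x ∧ c ≠ 0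
      · -- Case B1
        obtain ⟨x, α, β, hxi, hA2, hα⟩ := hB1
        have hli : LinearIndependent ℂ ![x, A x] :=
          LinearIndependent.pair_iff.mpr fun a b h => hxi a b h
        obtain ⟨F, hF⟩ := exists_dual ![x, A x] hli
        have k00 : F 0 x = 1 := by simpa using hF 0 0
        have k01 : F 0 (A x) = 0 := by simpa using hF 0 1
        have k10 : F 1 x = 0 := by simpa using hF 1 0
        have k11 : F 1 (A x) = 1 := by simpa using hF 1 1
        obtain ⟨c, hcpow⟩ := IsAlgClosed.exists_pow_nat_eq (k := ℂ) α⁻¹ (n := 2 * (r + s))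
          (by omega)
        have hc0 : c ≠ 0 := by
          intro h
          rw [h, zero_pow (by omega : 2 * (r + s) ≠ 0)] at hcpow
          exact inv_ne_zero hα hcpow.symm
        obtain ⟨a, hadef⟩ : ∃ a : ℂ, a = 2 * c := ⟨_, rfl⟩
        obtain ⟨b, hbdef⟩ : ∃ b : ℂ, b = c / 2 := ⟨_, rfl⟩
        have ha0 : a ≠ 0 := by rw [hadef]; exact mul_ne_zero two_ne_zero hc0
        have hb0 : b ≠ 0 := by rw [hbdef]; exact div_ne_zero hc0 two_ne_zero
        have hab : (a * b) ^ (r + s) = α⁻¹ := by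
          rw [show a * b = c ^ 2 by rw [hadef, hbdef]; ring, ← pow_mul]
          exact hcpow
        have hne2 : a ^ (r + s) ≠ b ^ (r + s) := by
          intro h
          rw [hadef, hbdef, mul_pow, div_pow] at h
          have hcn : c ^ (r + s) ≠ 0 := pow_ne_zero _ hc0
          have h' : c ^ (r + s) = 2 ^ (r + s) * c ^ (r + s) * 2 ^ (r + s) :=
            (div_eq_iff (pow_ne_zero _ (two_ne_zero))).mp h.symm
          have e : c ^ (r + s) * ((2 : ℂ) ^ (r + s) * 2 ^ (r + s) - 1) = 0 := by
            linear_combination -h'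
          have h4 : (2 : ℂ) ^ (r + s) * 2 ^ (r + s) = 1 := by
            rcases mul_eq_zero.mp e with h0 | h0
            · exact absurd h0 hcn
            · linear_combination h0
          have hn4 : ((2 : ℝ) ^ (r + s) * 2 ^ (r + s)) = 1 := by
            have := congrArg (fun w : ℂ => ‖w‖) h4
            simpa [norm_mul, norm_pow] using this
          have h2r : (1 : ℝ) < 2 ^ (r + s) := one_lt_pow₀ (by norm_num) (by omega)
          nlinarith
        have hSne : geomS a b (r + s) ≠ 0 := by
          intro h0
          apply hne2
          have hcl := geomS_closed a b (r + s)
          rw [h0, mul_zero] at hcl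
          exact sub_eq_zero.mp hcl.symm
        obtain ⟨e, hedef⟩ : ∃ e : ℂ, e = -(β * b ^ (r + s)) / geomS a b (r + s) := ⟨_, rfl⟩
        set B : X →L[ℂ] X := (a • F 0 + e • F 1).smulRight x + (b • F 1).smulRight (A x)
          with hBdef
        have hBapp : ∀ z, B z = (a * F 0 z + e * F 1 z) • x + (b * F 1 z) • A x := by
          intro z
          simp [hBdef, ContinuousLinearMap.smulRight_apply, ContinuousLinearMap.add_apply,
            ContinuousLinearMap.smul_apply, smul_smul]
        have hrkB : LinearMap.rank (B : X →ₗ[ℂ] X) ≤ 2 :=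
          rank_le_two B x (A x) fun z => ⟨_, _, hBapp z⟩
        have hFψ0 : ∀ p q : ℂ, F 0 (p • x + q • A x) = p := by
          intro p q
          rw [map_add, map_smul, map_smul, k00, k01]
          simp
        have hFψ1 : ∀ p q : ℂ, F 1 (p • x + q • A x) = q := by
          intro p q
          rw [map_add, map_smul, map_smul, k10, k11]
          simp
        have hBψ : ∀ p q : ℂ, B (p • x + q • A x) = (a * p + e * q) • x + (b * q) • A x := by
          intro p q
          rw [hBapp, hFψ0, hFψ1]
        have hAψ : ∀ p q : ℂ, A (p • x + q • A x) = (α * q) • x + (p + β * q) • A x := by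
          intro p q
          rw [map_add, map_smul, map_smul, hA2]
          module
        have hBk : ∀ (k : ℕ) (p q : ℂ), (B ^ k) (p • x + q • A x)
            = (a ^ k * p + e * geomS a b k * q) • x + (b ^ k * q) • A x := by
          intro k
          induction k with
          | zero =>
            intro p q
            simp [geomS]
          | succ k ih =>
            intro p q
            rw [pow_succ, ContinuousLinearMap.mul_apply, hBψ, ih]
            match_scalars
            · simp only [geomS]
              ring
            · ring
        have hsum : geomS a b r * a ^ s + b ^ r * geomS a b s = geomS a b (r + s) := by
          have hab' : a - b ≠ 0 := by
            rw [hadef, hbdef]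
            intro h
            apply hc0
            have h32 : (3 / 2 : ℂ) * c = 0 := by linear_combination h
            linear_combination (2 / 3 : ℂ) * h32
          apply mul_left_cancel₀ hab'
          calc (a - b) * (geomS a b r * a ^ s + b ^ r * geomS a b s)
              = ((a - b) * geomS a b r) * a ^ s + b ^ r * ((a - b) * geomS a b s) := by ring
            _ = (a ^ r - b ^ r) * a ^ s + b ^ r * (a ^ s - b ^ s) := by
                rw [geomS_closed, geomS_closed]
            _ = a ^ (r + s) - b ^ (r + s) := by rw [pow_add, pow_add]; ring
            _ = (a - b) * geomS a b (r + s) := (geomS_closed a b (r + s)).symm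
        have hzero : e * geomS a b (r + s) + β * b ^ (r + s) = 0 := by
          rw [hedef, div_mul_cancel₀ _ hSne]
          ring
        have hzero2 : e * (geomS a b r * a ^ s + b ^ r * geomS a b s) + β * (b ^ r * b ^ s)
            = 0 := by
          rw [hsum, ← pow_add]
          exact hzero
        have hone : α * (a ^ r * a ^ s * (b ^ r * b ^ s)) = 1 := by
          calc α * (a ^ r * a ^ s * (b ^ r * b ^ s)) = α * ((a * b) ^ (r + s)) := by
                rw [pow_add, mul_pow, mul_pow]
                ring
            _ = α * α⁻¹ := by rw [hab]
            _ = 1 := mul_inv_cancel₀ hα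
        have htr : b ^ r * (e * geomS a b s + β * b ^ s)
            = -(e * geomS a b r * a ^ s) := by
          linear_combination hzero2
        have hdet : (e * geomS a b r * a ^ s) * (e * geomS a b r * a ^ s)
            + (α * a ^ r * b ^ s + e * geomS a b r * (e * geomS a b s + β * b ^ s))
              * (b ^ r * a ^ s) = 1 := by
          linear_combination (e * geomS a b r * a ^ s) * hzero2 + hone
        have hTψ : ∀ p q : ℂ, (B ^ r * A * B ^ s) (p • x + q • A x)
            = ((e * geomS a b r * a ^ s) * p
                + (α * a ^ r * b ^ s + e * geomS a b r * (e * geomS a b s + β * b ^ s)) * q) • x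
              + ((b ^ r * a ^ s) * p + (b ^ r * (e * geomS a b s + β * b ^ s)) * q) • A x := by
          intro p q
          rw [hTapp, hBk s p q, hAψ, hBk r]
          match_scalars <;> ring
        refine core _ x (A x) hxi (e * geomS a b r * a ^ s)
          (α * a ^ r * b ^ s + e * geomS a b r * (e * geomS a b s + β * b ^ s))
          (b ^ r * a ^ s) (b ^ r * (e * geomS a b s + β * b ^ s)) htr hdet hTψ ?_ (h3 B hrkB)
        intro z
        by_cases hr0 : r = 0
        · obtain ⟨s', hs'⟩ : ∃ s', s = s' + 1 := ⟨s - 1, by omega⟩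
          refine ⟨α * (b ^ s' * (b * F 1 z)),
            a ^ s' * (a * F 0 z + e * F 1 z) + e * geomS a b s' * (b * F 1 z)
              + β * (b ^ s' * (b * F 1 z)), ?_⟩
          rw [hTapp, hr0, pow_zero, ContinuousLinearMap.one_apply, hs', pow_succ,
            ContinuousLinearMap.mul_apply, hBapp z, hBk s', hAψ]
        · obtain ⟨r', hr'⟩ : ∃ r', r = r' + 1 := ⟨r - 1, by omega⟩
          refine ⟨a * F 0 ((B ^ r') (A ((B ^ s) z))) + e * F 1 ((B ^ r') (A ((B ^ s) z))),
            b * F 1 ((B ^ r') (A ((B ^ s) z))), ?_⟩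
          rw [hTapp, hr', pow_succ', ContinuousLinearMap.mul_apply, hBapp]
      · push_neg at hB1
        have hspan : ∀ x : X, ∃ μ : ℂ, A (A x) = μ • A x := by
          intro x
          by_cases hxi : ∀ a b : ℂ, a • x + b • A x = 0 → a = 0 ∧ b = 0
          · obtain ⟨c, d, hcd⟩ := hA3 x hxi
            have hc0 : c = 0 := hB1 x c d hxi hcd.symm
            exact ⟨d, by rw [← hcd, hc0, zero_smul, zero_add]⟩
          · push_neg at hxi
            obtain ⟨a, b, hab, hne'⟩ := hxi
            by_cases hb : b = 0
            · have ha : a ≠ 0 := fun h => hne' h hb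
              have hx0 : x = 0 := by
                rw [hb, zero_smul, add_zero] at hab
                exact (smul_eq_zero.mp hab).resolve_left ha
              exact ⟨0, by rw [hx0]; simp⟩
            · have hAx : A x = (-a / b) • x := by
                have h2 : b • A x = (-a) • x := by
                  rw [neg_smul]
                  exact eq_neg_of_add_eq_zero_right hab
                rw [div_eq_inv_mul, ← smul_smul, ← h2, smul_smul, inv_mul_cancel₀ hb, one_smul]
              refine ⟨-a / b, ?_⟩
              rw [hAx, map_smul, hAx, smul_smul]
        obtain ⟨μ₁, hμ₁⟩ := hspan x₁
        obtain ⟨μ₂, hμ₂⟩ := hspan x₂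
        obtain ⟨μ₃, hμ₃⟩ := hspan (x₁ + x₂)
        have hμeq : μ₁ = μ₃ ∧ μ₂ = μ₃ := by
          have e1 : A (A (x₁ + x₂)) = μ₁ • A x₁ + μ₂ • A x₂ := by
            rw [map_add, map_add, hμ₁, hμ₂]
          have e2 : A (A (x₁ + x₂)) = μ₃ • A x₁ + μ₃ • A x₂ := by
            rw [hμ₃, map_add, smul_add]
          have h := e1.symm.trans e2
          have h0 : (μ₁ - μ₃) • A x₁ + (μ₂ - μ₃) • A x₂ = 0 := by
            rw [sub_smul, sub_smul]
            rw [show μ₁ • A x₁ - μ₃ • A x₁ + (μ₂ • A x₂ - μ₃ • A x₂)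
              = μ₁ • A x₁ + μ₂ • A x₂ - (μ₃ • A x₁ + μ₃ • A x₂) by abel, h]
            exact sub_self _
          obtain ⟨h1, h2⟩ := hind _ _ h0
          exact ⟨sub_eq_zero.mp h1, sub_eq_zero.mp h2⟩
        have hy1 : A x₁ ≠ 0 := by
          intro h0
          have := (hind 1 0 (by rw [h0]; simp)).1
          norm_num at this
        have hAA : ∀ x : X, A (A x) = μ₁ • A x := by
          intro x
          obtain ⟨ν, hν⟩ := hspan x
          by_cases hx0 : A x = 0
          · rw [hν, hx0, smul_zero, smul_zero]
          by_cases hdep : ∀ a b : ℂ, a • A x + b • A x₁ = 0 → a = 0 ∧ b = 0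
          · obtain ⟨ν', hν'⟩ := hspan (x + x₁)
            have e1 : A (A (x + x₁)) = ν • A x + μ₁ • A x₁ := by
              rw [map_add, map_add, hν, hμ₁]
            have e2 : A (A (x + x₁)) = ν' • A x + ν' • A x₁ := by
              rw [hν', map_add, smul_add]
            have h := e1.symm.trans e2
            have h0 : (ν - ν') • A x + (μ₁ - ν') • A x₁ = 0 := by
              rw [sub_smul, sub_smul]
              rw [show ν • A x - ν' • A x + (μ₁ • A x₁ - ν' • A x₁)
                = ν • A x + μ₁ • A x₁ - (ν' • A x + ν' • A x₁) by abel, h]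
              exact sub_self _
            obtain ⟨ha, hb⟩ := hdep _ _ h0
            rw [hν, sub_eq_zero.mp ha, ← sub_eq_zero.mp hb]
          · push_neg at hdep
            obtain ⟨a, b, hab, hne'⟩ := hdep
            have ha : a ≠ 0 := by
              intro h0
              have hb0 := hne' h0
              rw [h0, zero_smul, zero_add, smul_eq_zero] at hab
              exact hb0 (hab.resolve_right hy1)
            have hAx : A x = (-b / a) • A x₁ := by
              have h2 : a • A x = (-b) • A x₁ := by
                rw [neg_smul]
                exact eq_neg_of_add_eq_zero_left hab
              rw [div_eq_inv_mul, ← smul_smul, ← h2, smul_smul, inv_mul_cancel₀ ha, one_smul]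
            rw [hAx, map_smul, hμ₁, smul_smul, mul_comm, ← smul_smul, ← hAx]
        by_cases hc : μ₁ = 0
        · -- Case B2b : A ∘ A = 0
          have hA20 : ∀ x : X, A (A x) = 0 := fun x => by rw [hAA x, hc, zero_smul]
          have hquad : LinearIndependent ℂ ![x₁, x₂, A x₁, A x₂] := by
            rw [Fintype.linearIndependent_iff]
            intro g hg
            simp only [Fin.sum_univ_four, Matrix.cons_val_zero, Matrix.cons_val_one,
              Matrix.head_cons, Matrix.cons_val_two, Matrix.tail_cons,
              Matrix.cons_val_three] at hg
            have hg' := congrArg (fun w => A w) hg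
            simp only [map_add, map_smul, hA20, smul_zero, add_zero, map_zero] at hg'
            obtain ⟨e0, e1⟩ := hind _ _ hg'
            rw [e0, e1, zero_smul, zero_smul, zero_add, zero_add] at hg
            obtain ⟨e2, e3⟩ := hind _ _ hg
            intro i
            fin_cases i <;> simp [e0, e1, e2, e3]
          obtain ⟨F, hF⟩ := exists_dual ![x₁, x₂, A x₁, A x₂] hquad
          obtain ⟨b, hb⟩ := IsAlgClosed.exists_pow_nat_eq (k := ℂ) (-1 : ℂ) (n := r + s) (by omega)
          have k00 : F 0 x₁ = 1 := by simpa using hF 0 0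
          have k01 : F 0 x₂ = 0 := by simpa using hF 0 1
          have k02 : F 0 (A x₁) = 0 := by simpa using hF 0 2
          have k03 : F 0 (A x₂) = 0 := by simpa using hF 0 3
          have k10 : F 1 x₁ = 0 := by simpa using hF 1 0
          have k11 : F 1 x₂ = 1 := by simpa using hF 1 1
          have k12 : F 1 (A x₁) = 0 := by simpa using hF 1 2
          have k13 : F 1 (A x₂) = 0 := by simpa using hF 1 3
          have k20 : F 2 x₁ = 0 := by simpa using hF 2 0
          have k21 : F 2 x₂ = 0 := by simpa using hF 2 1
          have k22 : F 2 (A x₁) = 1 := by simpa using hF 2 2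
          have k23 : F 2 (A x₂) = 0 := by simpa using hF 2 3
          have k30 : F 3 x₁ = 0 := by simpa using hF 3 0
          have k31 : F 3 x₂ = 0 := by simpa using hF 3 1
          have k32 : F 3 (A x₁) = 0 := by simpa using hF 3 2
          have k33 : F 3 (A x₂) = 1 := by simpa using hF 3 3
          set B : X →L[ℂ] X := (F 0 + F 2).smulRight x₁ + (b • (F 1 + F 3)).smulRight x₂
            with hBdef
          have hBapp : ∀ z, B z = (F 0 z + F 2 z) • x₁ + (b * (F 1 z + F 3 z)) • x₂ := by
            intro z
            simp [hBdef, ContinuousLinearMap.smulRight_apply, ContinuousLinearMap.add_apply,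
              ContinuousLinearMap.smul_apply, smul_smul, mul_add]
          have hBx1 : B x₁ = (1 : ℂ) • x₁ := by
            rw [hBapp, k00, k20, k10, k30]
            simp
          have hBx2 : B x₂ = b • x₂ := by
            rw [hBapp, k01, k21, k11, k31]
            simp
          have hBA1 : B (A x₁) = x₁ := by
            rw [hBapp, k02, k22, k12, k32]
            simp
          have hBA2 : B (A x₂) = b • x₂ := by
            rw [hBapp, k03, k23, k13, k33]
            simp
          have hBkA1 : ∀ k, (B ^ (k + 1)) (A x₁) = x₁ := by
            intro k
            rw [pow_succ, ContinuousLinearMap.mul_apply, hBA1, pow_fix B hBx1]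
            simp
          have hBkA2 : ∀ k, (B ^ (k + 1)) (A x₂) = b ^ (k + 1) • x₂ := by
            intro k
            rw [pow_succ, ContinuousLinearMap.mul_apply, hBA2, map_smul, pow_fix B hBx2,
              smul_smul, ← pow_succ']
          have hrkB : LinearMap.rank (B : X →ₗ[ℂ] X) ≤ 2 :=
            rank_le_two B x₁ x₂ fun z => ⟨_, _, hBapp z⟩
          have hx12 : ∀ a c : ℂ, a • x₁ + c • x₂ = 0 → a = 0 ∧ c = 0 := by
            intro a c hac
            have h' := congrArg (fun w => A w) hac
            simp only [map_add, map_smul, map_zero] at h'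
            exact hind _ _ h'
          by_cases hr0 : r = 0
          · obtain ⟨s', hs'⟩ : ∃ s', s = s' + 1 := ⟨s - 1, by omega⟩
            have hbs : b ^ s' * b = -1 := by
              rw [← pow_succ, ← hs', show s = r + s by omega]
              exact hb
            refine core _ (A x₁) (A x₂) (fun a c hac => hind a c hac) 1 0 0 (-1)
              (by norm_num) (by norm_num) ?_ ?_ (h3 B hrkB)
            · intro p q
              rw [hTapp, hr0, pow_zero, ContinuousLinearMap.one_apply, hs', pow_succ,
                ContinuousLinearMap.mul_apply, map_add, map_smul, map_smul, hBA1, hBA2]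
              simp only [map_add, map_smul, pow_fix B hBx1, pow_fix B hBx2, one_pow, one_smul]
              match_scalars
              · ring
              · linear_combination q * hbs
            · intro z
              refine ⟨F 0 z + F 2 z, b ^ s' * (b * (F 1 z + F 3 z)), ?_⟩
              rw [hTapp, hr0, pow_zero, ContinuousLinearMap.one_apply, hs', pow_succ,
                ContinuousLinearMap.mul_apply, hBapp]
              simp only [map_add, map_smul, pow_fix B hBx1, pow_fix B hBx2, one_pow, one_smul]
              module
          · obtain ⟨r', hr'⟩ : ∃ r', r = r' + 1 := ⟨r - 1, by omega⟩
            have hbn : b ^ s * b ^ (r' + 1) = -1 := by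
              rw [← pow_add, show s + (r' + 1) = r + s by omega]
              exact hb
            refine core _ x₁ x₂ hx12 1 0 0 (-1) (by norm_num) (by norm_num) ?_ ?_ (h3 B hrkB)
            · intro p q
              rw [hTapp, hr']
              simp only [map_add, map_smul, pow_fix B hBx1, pow_fix B hBx2, hBkA1, hBkA2,
                one_pow, one_smul]
              match_scalars
              · ring
              · linear_combination q * hbn
            · intro z
              refine ⟨F 0 ((B ^ r') (A ((B ^ s) z))) + F 2 ((B ^ r') (A ((B ^ s) z))),
                b * (F 1 ((B ^ r') (A ((B ^ s) z))) + F 3 ((B ^ r') (A ((B ^ s) z)))), ?_⟩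
              rw [hTapp, hr', pow_succ', ContinuousLinearMap.mul_apply, hBapp]
        · -- Case B2a : A = μ₁ • id on range A, μ₁ ≠ 0
          have hli : LinearIndependent ℂ ![A x₁, A x₂] := LinearIndependent.pair_iff.mpr
            (fun a b hab => hind a b hab)
          obtain ⟨F, hF⟩ := exists_dual ![A x₁, A x₂] hli
          obtain ⟨a, ha⟩ := IsAlgClosed.exists_pow_nat_eq (k := ℂ) μ₁⁻¹ (n := r + s) (by omega)
          obtain ⟨b, hb⟩ := IsAlgClosed.exists_pow_nat_eq (k := ℂ) (-μ₁⁻¹) (n := r + s) (by omega)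
          have hF00 : F 0 (A x₁) = 1 := by simpa using hF 0 0
          have hF01 : F 0 (A x₂) = 0 := by simpa using hF 0 1
          have hF10 : F 1 (A x₁) = 0 := by simpa using hF 1 0
          have hF11 : F 1 (A x₂) = 1 := by simpa using hF 1 1
          set B : X →L[ℂ] X := (a • F 0).smulRight (A x₁) + (b • F 1).smulRight (A x₂) with hB
          have hBapp : ∀ z, B z = (a * F 0 z) • A x₁ + (b * F 1 z) • A x₂ := by
            intro z
            simp [hB, ContinuousLinearMap.smulRight_apply, ContinuousLinearMap.add_apply,
              ContinuousLinearMap.smul_apply, smul_smul]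
          have hBy1 : B (A x₁) = a • A x₁ := by
            rw [hBapp, hF00, hF10]
            simp
          have hBy2 : B (A x₂) = b • A x₂ := by
            rw [hBapp, hF01, hF11]
            simp
          have hrkB : LinearMap.rank (B : X →ₗ[ℂ] X) ≤ 2 :=
            rank_le_two B (A x₁) (A x₂) fun z => ⟨_, _, hBapp z⟩
          have hy1e : A (A x₁) = μ₁ • A x₁ := hμ₁
          have hy2e : A (A x₂) = μ₁ • A x₂ := by rw [hμ₂, hμeq.2, ← hμeq.1]
          have haμ : a ^ r * a ^ s * μ₁ = 1 := by
            rw [← pow_add, ha]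
            exact inv_mul_cancel₀ hc
          have hbμ : b ^ r * b ^ s * μ₁ = -1 := by
            rw [← pow_add, hb]
            field_simp
          refine core (B ^ r * A * B ^ s) (A x₁) (A x₂) (fun a b hab => hind a b hab) 1 0 0 (-1)
            (by norm_num) (by norm_num) ?_ ?_ (h3 B hrkB)
          · intro p q
            rw [hTapp]
            simp only [map_add, map_smul, pow_fix B hBy1, pow_fix B hBy2, hy1e, hy2e]
            match_scalars
            · linear_combination p * haμ
            · linear_combination q * hbμ
          · intro z
            by_cases hr0 : r = 0
            · obtain ⟨s', hs'⟩ : ∃ s', s = s' + 1 := ⟨s - 1, by omega⟩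
              refine ⟨μ₁ * (a ^ s' * (a * F 0 z)), μ₁ * (b ^ s' * (b * F 1 z)), ?_⟩
              rw [hTapp, hr0, pow_zero, ContinuousLinearMap.one_apply, hs', pow_succ,
                ContinuousLinearMap.mul_apply, hBapp, map_add, map_smul, map_smul,
                pow_fix B hBy1, pow_fix B hBy2, map_add, map_smul, map_smul, map_smul, map_smul,
                hy1e, hy2e]
              module
            · obtain ⟨r', hr'⟩ : ∃ r', r = r' + 1 := ⟨r - 1, by omega⟩
              refine ⟨a * F 0 ((B ^ r') (A ((B ^ s) z))), b * F 1 ((B ^ r') (A ((B ^ s) z))), ?_⟩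
              rw [hTapp, hr', pow_succ', ContinuousLinearMap.mul_apply, hBapp]
  tfae_finish
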